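/- Let L > 0, N = 2K + 1 an odd positive integer, h = L/N, and let f_F(x,y) = Σ_{ℓ,m=−K}^{K} c_{ℓm} e^{2πi(ℓx+my)/L} be a trigonometric polynomial of degree at most K in each variable (with complex coefficients c_{ℓm}, taking real values on ℝ²). Let f be the grid function of its samples f_{ij} = f_F(i·h, (j−1/2)·h) for i, j = 0, …, N−1. Then the discrete L⁴ norm of the samples is controlled by the continuous L⁴ norm: ( h² Σ_{i,j=0}^{N−1} |f_{ij}|⁴ )^{1/4} ≤ √2 · ( ∫_Ω |f_F(x,y)|⁴ dx dy )^{1/4}, where Ω = (0,L)². -/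

import Mathlib

open MeasureTheory

open Complex Finset


lemma st17_mul_conj_self (z : ℂ) : z * (starRingEnd ℂ) z = ((‖z‖ ^ 2 : ℝ) : ℂ) := by
  rw [Complex.mul_conj]
  norm_cast
  simp [Complex.normSq_eq_norm_sq]

lemma st17_orthoC (L : ℝ) (hL : 0 < L) (k : ℤ) :
    ∫ x in Set.Ioo (0:ℝ) L, Complex.exp (2 * Real.pi * Complex.I * k * x / L) =
      if k = 0 then (L:ℂ) else 0 := by
  rcases eq_or_ne k 0 with hk | hk
  · simp [hk, hL.le]
  · have h0 : (2 * (Real.pi:ℂ) * Complex.I * k / L) ≠ 0 := by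
      apply div_ne_zero
      · simp [Real.pi_ne_zero, Complex.I_ne_zero, hk]
      · exact_mod_cast hL.ne'
    have harg : ∀ x : ℝ, (2 * (Real.pi:ℂ) * Complex.I * k * x / L) = (2 * Real.pi * Complex.I * k / L) * x :=
      fun x => by ring
    simp_rw [harg]
    rw [← integral_Ioc_eq_integral_Ioo, ← intervalIntegral.integral_of_le hL.le,
      integral_exp_mul_complex h0]
    have he : Complex.exp ((2 * Real.pi * Complex.I * k / L) * L) = 1 := by
      have harg2 : (2 * (Real.pi:ℂ) * Complex.I * k / L) * (L:ℝ) = (k:ℤ) * (2 * Real.pi * Complex.I) := by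
        have hLz : (L:ℂ) ≠ 0 := by exact_mod_cast hL.ne'
        field_simp
      rw [harg2, Complex.exp_int_mul_two_pi_mul_I]
    simp [he, hk]

lemma st17_orthoD (N : ℕ) (hN : 0 < N) (k : ℤ) :
    ∑ i ∈ Finset.range N, Complex.exp (2 * Real.pi * Complex.I * ((k:ℂ) * (i:ℕ)) / N) =
      if (N:ℤ) ∣ k then (N:ℂ) else 0 := by
  have hNz : (N:ℂ) ≠ 0 := Nat.cast_ne_zero.mpr hN.ne'
  have hterm : ∀ i : ℕ, Complex.exp (2 * Real.pi * Complex.I * ((k:ℂ) * (i:ℕ)) / N)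
      = Complex.exp (2 * Real.pi * Complex.I * k / N) ^ i := by
    intro i; rw [← Complex.exp_nat_mul]; congr 1; ring
  simp_rw [hterm]
  by_cases hd : (N:ℤ) ∣ k
  · obtain ⟨t, rfl⟩ := hd
    have h1 : Complex.exp (2 * Real.pi * Complex.I * ((N:ℤ)*t : ℤ) / N) = 1 := by
      have harg : (2 * (Real.pi:ℂ) * Complex.I * (((N:ℤ)*t : ℤ):ℂ) / N) = (t:ℤ) * (2 * Real.pi * Complex.I) := by
        push_cast
        field_simp
      rw [harg, Complex.exp_int_mul_two_pi_mul_I]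
    rw [h1]
    simp
  · have hne : Complex.exp (2 * Real.pi * Complex.I * k / N) ≠ 1 := by
      intro hone
      rw [Complex.exp_eq_one_iff] at hone
      obtain ⟨n, hn⟩ := hone
      apply hd
      refine ⟨n, ?_⟩
      rw [div_eq_iff hNz] at hn
      have hne2 : (2 * (Real.pi:ℂ) * Complex.I) ≠ 0 := by
        simp [Real.pi_ne_zero, Complex.I_ne_zero]
      have hkc : (k:ℂ) = (N:ℂ) * n := by
        apply mul_left_cancel₀ hne2
        linear_combination hn
      exact_mod_cast hkc
    rw [geom_sum_eq hne]
    have hpow : Complex.exp (2 * Real.pi * Complex.I * k / N) ^ N = 1 := by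
      rw [← Complex.exp_nat_mul]
      have harg : (N:ℂ) * (2 * Real.pi * Complex.I * k / N) = (k:ℤ) * (2 * Real.pi * Complex.I) := by
        field_simp
      rw [harg, Complex.exp_int_mul_two_pi_mul_I]
    simp [hpow, hd]

lemma st17_sq_norm_sum_le {α : Type*} (s : Finset α) (f : α → ℂ) :
    ‖∑ p ∈ s, f p‖ ^ 2 ≤ (s.card : ℝ) * ∑ p ∈ s, ‖f p‖ ^ 2 := by
  calc ‖∑ p ∈ s, f p‖ ^ 2 ≤ (∑ p ∈ s, ‖f p‖) ^ 2 :=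
        pow_le_pow_left₀ (norm_nonneg _) (norm_sum_le _ _) 2
    _ = (∑ p ∈ s, 1 * ‖f p‖) ^ 2 := by simp
    _ ≤ (∑ p ∈ s, 1 ^ 2) * ∑ p ∈ s, ‖f p‖ ^ 2 := Finset.sum_mul_sq_le_sq_mul_sq _ _ _
    _ = (s.card : ℝ) * ∑ p ∈ s, ‖f p‖ ^ 2 := by simp

lemma st17_norm_sq_expand {α : Type*} (s : Finset α) (f : α → ℂ) :
    ((‖∑ p ∈ s, f p‖ ^ 2 : ℝ) : ℂ) = ∑ p ∈ s, ∑ q ∈ s, f p * (starRingEnd ℂ) (f q) := by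
  rw [← Finset.sum_mul_sum, ← map_sum, st17_mul_conj_self]

lemma st17_group {α κ : Type*} [DecidableEq κ] (P : Finset α) (Φ : α → κ) (f : α → ℂ) :
    ∑ p ∈ P, ∑ q ∈ P, (if Φ p = Φ q then f p * (starRingEnd ℂ) (f q) else 0)
      = ∑ r ∈ P.image Φ, ((‖∑ p ∈ P.filter (fun p => Φ p = r), f p‖ ^ 2 : ℝ) : ℂ) := by
  have h1 : ∀ p ∈ P, ∑ q ∈ P, (if Φ p = Φ q then f p * (starRingEnd ℂ) (f q) else 0)
      = f p * (starRingEnd ℂ) (∑ q ∈ P.filter (fun q => Φ q = Φ p), f q) := by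
    intro p _
    rw [map_sum, Finset.mul_sum, Finset.sum_filter]
    apply Finset.sum_congr rfl
    intro q _
    by_cases h : Φ q = Φ p
    · simp [h]
    · simp [h, Ne.symm h]
  rw [Finset.sum_congr rfl h1]
  rw [← Finset.sum_fiberwise_of_maps_to (fun p hp => Finset.mem_image_of_mem Φ hp)
    (fun p => f p * (starRingEnd ℂ) (∑ q ∈ P.filter (fun q => Φ q = Φ p), f q))]
  apply Finset.sum_congr rfl
  intro r _
  have h2 : ∀ p ∈ P.filter (fun p => Φ p = r),
      f p * (starRingEnd ℂ) (∑ q ∈ P.filter (fun q => Φ q = Φ p), f q)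
      = f p * (starRingEnd ℂ) (∑ q ∈ P.filter (fun q => Φ q = r), f q) := by
    intro p hp
    rw [Finset.mem_filter] at hp
    rw [hp.2]
  rw [Finset.sum_congr rfl h2, ← Finset.sum_mul, st17_mul_conj_self]

lemma st17_integral_ofReal {f : ℝ → ℝ} {μ : MeasureTheory.Measure ℝ} :
    ∫ x, ((f x : ℝ) : ℂ) ∂μ = ((∫ x, f x ∂μ : ℝ) : ℂ) := integral_ofReal

set_option maxHeartbeats 2000000 in
/-- (Lemma A.2: discrete `L⁴` norm of grid samples of a trigonometric
polynomial of degree `≤ K` is controlled by its continuous `L⁴` norm.)  Let `L > 0`,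
`N = 2K + 1` odd, `h = L/N`, and let
`fF(x,y) = Σ_{ℓ,m=−K}^{K} c_{ℓm} e^{2πi(ℓx+my)/L}` take real values on `ℝ²`.  With the
samples `f_{ij} = fF(i·h, (j−1/2)·h)`, one has
`(h² Σ_{i,j=0}^{N−1} |f_{ij}|⁴)^{1/4} ≤ √2 (∫_Ω |fF|⁴)^{1/4}`, `Ω = (0,L)²`. -/
theorem statement17 (L : ℝ) (hL : 0 < L) (K : ℕ) (N : ℕ) (hN : N = 2 * K + 1)
    (h : ℝ) (hh : h = L / N) (c : ℤ → ℤ → ℂ) (fF : ℝ → ℝ → ℂ)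
    (hfF : ∀ x y : ℝ, fF x y =
      ∑ ℓ ∈ Finset.Icc (-(K : ℤ)) (K : ℤ), ∑ m ∈ Finset.Icc (-(K : ℤ)) (K : ℤ),
        c ℓ m * Complex.exp (2 * Real.pi * Complex.I * ((ℓ : ℂ) * x + (m : ℂ) * y) / L))
    (hreal : ∀ x y : ℝ, (fF x y).im = 0) :
    (h ^ 2 * ∑ i ∈ Finset.range N, ∑ j ∈ Finset.range N,
        ‖fF ((i : ℝ) * h) (((j : ℝ) - 1 / 2) * h)‖ ^ 4) ^ ((1 : ℝ) / 4) ≤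
      Real.sqrt 2 *
        (∫ x in Set.Ioo (0 : ℝ) L, ∫ y in Set.Ioo (0 : ℝ) L, ‖fF x y‖ ^ 4) ^ ((1 : ℝ) / 4) := by
  subst hh
  have hNpos : 0 < N := by omega
  have hNR : (0:ℝ) < (N:ℝ) := by exact_mod_cast hNpos
  have hLz : (L:ℂ) ≠ 0 := by exact_mod_cast hL.ne'
  have hNzC : (N:ℂ) ≠ 0 := Nat.cast_ne_zero.mpr hNpos.ne'
  set R : Finset ℤ := Finset.Icc (-(K:ℤ)) K with hRdef
  set J : Finset ℤ := Finset.Icc (-(2*K:ℤ)) (2*K) with hJdef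
  set P : Finset (ℤ×ℤ) := J ×ˢ J with hPdef
  set e : ℤ → ℝ → ℂ := fun k x => Complex.exp (2 * Real.pi * Complex.I * k * x / L) with hedef
  set d : ℤ × ℤ → ℂ := fun p => ∑ a ∈ R ×ˢ R, ∑ b ∈ R ×ˢ R,
      (if a + b = p then c a.1 a.2 * c b.1 b.2 else 0) with hddef
  have he_mul : ∀ (k k' : ℤ) (x : ℝ), e k x * e k' x = e (k + k') x := by
    intro k k' x
    simp only [hedef]
    rw [← Complex.exp_add]
    congr 1
    push_cast
    ring
  have he_conj : ∀ (k : ℤ) (x : ℝ), (starRingEnd ℂ) (e k x) = e (-k) x := by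
    intro k x
    simp only [hedef]
    rw [← Complex.exp_conj]
    congr 1
    simp only [map_div₀, map_mul, Complex.conj_I, Complex.conj_ofReal, map_intCast, map_ofNat]
    push_cast
    ring
  have he_cont : ∀ k : ℤ, Continuous (e k) := by
    intro k
    simp only [hedef]
    exact Complex.continuous_exp.comp ((continuous_const.mul Complex.continuous_ofReal).div_const _)
  have hIntOn : ∀ (f : ℝ → ℂ), Continuous f → IntegrableOn f (Set.Ioo (0:ℝ) L) :=
    fun f hf => (hf.integrableOn_Icc).mono_set Set.Ioo_subset_Icc_self
  have hfF2 : ∀ x y : ℝ, fF x y = ∑ a ∈ R ×ˢ R, c a.1 a.2 * (e a.1 x * e a.2 y) := by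
    intro x y
    rw [hfF, Finset.sum_product]
    refine Finset.sum_congr rfl fun ℓ _ => Finset.sum_congr rfl fun m _ => ?_
    simp only [hedef]
    rw [← Complex.exp_add]
    congr 2
    ring
  have hmem : ∀ a ∈ R ×ˢ R, ∀ b ∈ R ×ˢ R, a + b ∈ P := by
    intro a ha b hb
    simp only [hPdef, hRdef, hJdef, Finset.mem_product, Finset.mem_Icc, Prod.fst_add,
      Prod.snd_add] at ha hb ⊢
    omega
  have hG : ∀ x y : ℝ, fF x y ^ 2 = ∑ p ∈ P, d p * (e p.1 x * e p.2 y) := by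
    intro x y
    have step : ∑ p ∈ P, d p * (e p.1 x * e p.2 y)
        = ∑ a ∈ R ×ˢ R, ∑ b ∈ R ×ˢ R,
            (c a.1 a.2 * (e a.1 x * e a.2 y)) * (c b.1 b.2 * (e b.1 x * e b.2 y)) := by
      simp only [hddef, Finset.sum_mul]
      rw [Finset.sum_comm]
      refine Finset.sum_congr rfl fun a ha => ?_
      rw [Finset.sum_comm]
      refine Finset.sum_congr rfl fun b hb => ?_
      have hpt : ∀ p ∈ P, (if a + b = p then c a.1 a.2 * c b.1 b.2 else 0) * (e p.1 x * e p.2 y)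
          = if a + b = p then (c a.1 a.2 * c b.1 b.2) * (e p.1 x * e p.2 y) else 0 := by
        intro p _
        by_cases hab : a + b = p <;> simp [hab]
      rw [Finset.sum_congr rfl hpt, Finset.sum_ite_eq, if_pos (hmem a ha b hb)]
      rw [Prod.fst_add, Prod.snd_add, ← he_mul, ← he_mul]
      ring
    rw [hfF2, sq, Finset.sum_mul_sum, step]
  have hnorm4 : ∀ x y : ℝ, (‖fF x y‖^4 : ℝ) = ‖∑ p ∈ P, d p * (e p.1 x * e p.2 y)‖^2 := by
    intro x y
    rw [← hG, norm_pow]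
    ring
  -- continuous side
  have hinner : ∀ x : ℝ, ((∫ y in Set.Ioo (0:ℝ) L, ‖fF x y‖^4 : ℝ) : ℂ)
      = ∑ p ∈ P, ∑ q ∈ P, (if p.2 = q.2 then
          (d p * (starRingEnd ℂ) (d q) * (e p.1 x * e (-q.1) x)) * (L:ℂ) else 0) := by
    intro x
    rw [← st17_integral_ofReal]
    have hptw : ∀ y : ℝ, ((‖fF x y‖^4 : ℝ) : ℂ)
        = ∑ p ∈ P, ∑ q ∈ P,
            (d p * (starRingEnd ℂ) (d q) * (e p.1 x * e (-q.1) x)) * e (p.2 - q.2) y := by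
      intro y
      rw [hnorm4 x y, st17_norm_sq_expand]
      refine Finset.sum_congr rfl fun p _ => Finset.sum_congr rfl fun q _ => ?_
      rw [map_mul, map_mul, he_conj, he_conj]
      rw [show p.2 - q.2 = p.2 + -q.2 from sub_eq_add_neg _ _, ← he_mul]
      ring
    simp_rw [hptw]
    rw [integral_finset_sum _ (fun p _ => integrable_finset_sum _
      (fun q _ => ((hIntOn _ (he_cont _)).const_mul _)))]
    refine Finset.sum_congr rfl fun p _ => ?_
    rw [integral_finset_sum _ (fun q _ => ((hIntOn _ (he_cont _)).const_mul _))]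
    refine Finset.sum_congr rfl fun q _ => ?_
    rw [integral_const_mul]
    have horth := st17_orthoC L hL (p.2 - q.2)
    simp only [hedef]
    rw [horth]
    by_cases hpq : p.2 = q.2
    · simp [hpq, sub_eq_zero]
    · have hne : ¬(p.2 - q.2 = 0) := sub_ne_zero.mpr hpq
      simp [hpq, hne]
  have houterC : (((∫ x in Set.Ioo (0:ℝ) L, ∫ y in Set.Ioo (0:ℝ) L, ‖fF x y‖^4) : ℝ) : ℂ)
      = (L:ℂ)^2 * ∑ p ∈ P, ((‖d p‖^2 : ℝ) : ℂ) := by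
    rw [← st17_integral_ofReal]
    simp_rw [hinner]
    have hsw : ∀ (p q : ℤ×ℤ) (x : ℝ),
        (if p.2 = q.2 then (d p * (starRingEnd ℂ) (d q) * (e p.1 x * e (-q.1) x)) * (L:ℂ) else 0)
        = (if p.2 = q.2 then d p * (starRingEnd ℂ) (d q) * (L:ℂ) else 0) * e (p.1 - q.1) x := by
      intro p q x
      rw [show p.1 - q.1 = p.1 + -q.1 from sub_eq_add_neg _ _, ← he_mul]
      by_cases hpq : p.2 = q.2
      · simp only [hpq, if_true, if_pos]
        ring
      · simp [hpq]
    simp_rw [hsw]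
    rw [integral_finset_sum _ (fun p _ => integrable_finset_sum _
      (fun q _ => ((hIntOn _ (he_cont _)).const_mul _)))]
    rw [show (L:ℂ)^2 * ∑ p ∈ P, ((‖d p‖^2 : ℝ):ℂ) = ∑ p ∈ P, ((‖d p‖^2:ℝ):ℂ) * (L:ℂ)^2 from by
      rw [Finset.mul_sum]; exact Finset.sum_congr rfl fun p _ => by ring]
    refine Finset.sum_congr rfl fun p hp => ?_
    rw [integral_finset_sum _ (fun q _ => ((hIntOn _ (he_cont _)).const_mul _))]
    have hq : ∀ q ∈ P, (∫ x in Set.Ioo (0:ℝ) L,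
        (if p.2 = q.2 then d p * (starRingEnd ℂ) (d q) * (L:ℂ) else 0) * e (p.1 - q.1) x)
        = if q = p then d p * (starRingEnd ℂ) (d p) * ((L:ℂ) * (L:ℂ)) else 0 := by
      intro q _
      rw [integral_const_mul]
      have horth := st17_orthoC L hL (p.1 - q.1)
      simp only [hedef]
      rw [horth]
      rcases eq_or_ne q p with rfl | hne
      · simp only [sub_self, if_pos rfl]
        simp
        ring
      · rw [if_neg hne]
        by_cases h2 : p.2 = q.2
        · have h1 : ¬(p.1 - q.1 = 0) := by
            intro h0
            exact hne (Prod.ext_iff.mpr ⟨by omega, h2.symm⟩)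
          simp [h1]
        · simp [h2]
    rw [Finset.sum_congr rfl hq, Finset.sum_ite_eq' P p _, if_pos hp, st17_mul_conj_self]
    ring
  have hcont : (∫ x in Set.Ioo (0:ℝ) L, ∫ y in Set.Ioo (0:ℝ) L, ‖fF x y‖^4)
      = L^2 * ∑ p ∈ P, ‖d p‖^2 := by
    rw [← Complex.ofReal_inj, houterC]
    push_cast
    ring
  -- discrete side
  set w : ℤ → ℂ := fun m => Complex.exp (2 * Real.pi * Complex.I * m / N) with hwdef
  set d' : ℤ×ℤ → ℂ := fun p => d p * Complex.exp (((-Real.pi * p.2 / N : ℝ) : ℂ) * Complex.I)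
    with hd'def
  set Φ : ℤ×ℤ → ℤ×ℤ := fun p => (p.1 % (N:ℤ), p.2 % (N:ℤ)) with hΦdef
  have hw_mul : ∀ a b : ℤ, w a * w b = w (a + b) := by
    intro a b
    simp only [hwdef]
    rw [← Complex.exp_add]
    congr 1
    push_cast
    ring
  have hw_conj : ∀ a : ℤ, (starRingEnd ℂ) (w a) = w (-a) := by
    intro a
    simp only [hwdef]
    rw [← Complex.exp_conj]
    congr 1
    simp only [map_div₀, map_mul, Complex.conj_I, Complex.conj_ofReal, map_intCast, map_ofNat,
      map_natCast]
    push_cast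
    ring
  have hw_sum : ∀ k : ℤ, ∑ i ∈ Finset.range N, w (k * i) = if (N:ℤ) ∣ k then (N:ℂ) else 0 := by
    intro k
    rw [← st17_orthoD N hNpos k]
    refine Finset.sum_congr rfl fun i _ => ?_
    simp only [hwdef]
    congr 1
    push_cast
    ring
  have hgrid1 : ∀ (k:ℤ) (i:ℕ), e k ((i:ℝ) * (L/(N:ℝ))) = w (k * i) := by
    intro k i
    simp only [hedef, hwdef]
    congr 1
    push_cast
    field_simp
  have hgrid2 : ∀ (m:ℤ) (j:ℕ), e m (((j:ℝ) - 1/2) * (L/(N:ℝ)))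
      = Complex.exp (((-Real.pi * m / N : ℝ):ℂ) * Complex.I) * w (m * j) := by
    intro m j
    simp only [hedef, hwdef]
    rw [← Complex.exp_add]
    congr 1
    push_cast
    field_simp
    ring
  have hsamp : ∀ i j : ℕ, fF ((i:ℝ) * (L/(N:ℝ))) (((j:ℝ) - 1/2) * (L/(N:ℝ))) ^ 2
      = ∑ p ∈ P, d' p * (w (p.1 * i) * w (p.2 * j)) := by
    intro i j
    rw [hG]
    refine Finset.sum_congr rfl fun p _ => ?_
    rw [hgrid1, hgrid2]
    simp only [hd'def]
    ring
  have hsamp4 : ∀ i j : ℕ, ‖fF ((i:ℝ) * (L/(N:ℝ))) (((j:ℝ) - 1/2) * (L/(N:ℝ)))‖^4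
      = ‖∑ p ∈ P, d' p * (w (p.1 * i) * w (p.2 * j))‖^2 := by
    intro i j
    rw [← hsamp, norm_pow]
    ring
  have hmod : ∀ a b : ℤ, a % (N:ℤ) = b % (N:ℤ) ↔ (N:ℤ) ∣ (a - b) := by
    intro a b
    rw [Int.emod_eq_emod_iff_emod_sub_eq_zero]
    exact ⟨Int.dvd_of_emod_eq_zero, Int.emod_eq_zero_of_dvd⟩
  have hΦiff : ∀ p q : ℤ×ℤ, Φ p = Φ q ↔ ((N:ℤ) ∣ (p.1 - q.1) ∧ (N:ℤ) ∣ (p.2 - q.2)) := by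
    intro p q
    simp only [hΦdef, Prod.mk.injEq]
    rw [hmod, hmod]
  have hDC : ((∑ i ∈ Finset.range N, ∑ j ∈ Finset.range N,
        ‖fF ((i:ℝ) * (L/(N:ℝ))) (((j:ℝ) - 1/2) * (L/(N:ℝ)))‖^4 : ℝ) : ℂ)
      = (N:ℂ)^2 * ∑ p ∈ P, ∑ q ∈ P,
          (if Φ p = Φ q then d' p * (starRingEnd ℂ) (d' q) else 0) := by
    simp_rw [hsamp4, Complex.ofReal_sum, st17_norm_sq_expand]
    have hterm : ∀ (p q : ℤ×ℤ) (i j : ℕ),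
        (d' p * (w (p.1 * i) * w (p.2 * j))) * (starRingEnd ℂ) (d' q * (w (q.1 * i) * w (q.2 * j)))
        = (d' p * (starRingEnd ℂ) (d' q)) * (w ((p.1 - q.1) * i) * w ((p.2 - q.2) * j)) := by
      intro p q i j
      simp only [map_mul, hw_conj]
      rw [show (p.1 - q.1) * (i:ℤ) = p.1 * i + -(q.1 * i) by ring, ← hw_mul,
          show (p.2 - q.2) * (j:ℤ) = p.2 * j + -(q.2 * j) by ring, ← hw_mul]
      ring
    simp_rw [hterm]
    rw [← Finset.sum_product' (Finset.range N) (Finset.range N)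
        (fun i j => ∑ p ∈ P, ∑ q ∈ P,
          (d' p * (starRingEnd ℂ) (d' q)) * (w ((p.1 - q.1) * i) * w ((p.2 - q.2) * j)))]
    rw [show (∑ u ∈ Finset.range N ×ˢ Finset.range N, ∑ p ∈ P, ∑ q ∈ P,
          (d' p * (starRingEnd ℂ) (d' q)) * (w ((p.1 - q.1) * u.1) * w ((p.2 - q.2) * u.2)))
        = ∑ u ∈ Finset.range N ×ˢ Finset.range N, ∑ v ∈ P ×ˢ P,
          (d' v.1 * (starRingEnd ℂ) (d' v.2)) * (w ((v.1.1 - v.2.1) * u.1) * w ((v.1.2 - v.2.2) * u.2)) from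
      Finset.sum_congr rfl fun u _ => (Finset.sum_product P P
        (fun v => d' v.1 * (starRingEnd ℂ) (d' v.2) *
          (w ((v.1.1 - v.2.1) * u.1) * w ((v.1.2 - v.2.2) * u.2)))).symm]
    rw [Finset.sum_comm]
    have hv : ∀ v : (ℤ×ℤ)×(ℤ×ℤ), (∑ u ∈ Finset.range N ×ˢ Finset.range N,
        (d' v.1 * (starRingEnd ℂ) (d' v.2)) * (w ((v.1.1 - v.2.1) * u.1) * w ((v.1.2 - v.2.2) * u.2)))
        = (N:ℂ)^2 * (if Φ v.1 = Φ v.2 then d' v.1 * (starRingEnd ℂ) (d' v.2) else 0) := by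
      intro v
      rw [Finset.sum_product]
      have key : ∑ i ∈ Finset.range N, ∑ j ∈ Finset.range N,
          (d' v.1 * (starRingEnd ℂ) (d' v.2)) * (w ((v.1.1 - v.2.1) * i) * w ((v.1.2 - v.2.2) * j))
          = (d' v.1 * (starRingEnd ℂ) (d' v.2)) *
            ((∑ i ∈ Finset.range N, w ((v.1.1 - v.2.1) * i)) *
              (∑ j ∈ Finset.range N, w ((v.1.2 - v.2.2) * j))) := by
        rw [Finset.sum_mul_sum, Finset.mul_sum]
        refine Finset.sum_congr rfl fun i _ => ?_
        rw [Finset.mul_sum]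
      rw [key, hw_sum, hw_sum]
      simp only [hΦiff]
      by_cases h1 : (N:ℤ) ∣ (v.1.1 - v.2.1) <;> by_cases h2 : (N:ℤ) ∣ (v.1.2 - v.2.2)
      · simp only [h1, h2, if_true, and_self]
        ring
      · simp [h1, h2]
      · simp [h1, h2]
      · simp [h1, h2]
    rw [Finset.sum_congr rfl (fun v _ => hv v), ← Finset.mul_sum, Finset.sum_product]
  have hDC2 : ((∑ i ∈ Finset.range N, ∑ j ∈ Finset.range N,
        ‖fF ((i:ℝ) * (L/(N:ℝ))) (((j:ℝ) - 1/2) * (L/(N:ℝ)))‖^4 : ℝ) : ℂ)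
      = (N:ℂ)^2 * ∑ r ∈ P.image Φ, ((‖∑ p ∈ P.filter (fun p => Φ p = r), d' p‖^2 : ℝ):ℂ) := by
    rw [hDC, st17_group]
  have hDreal : (∑ i ∈ Finset.range N, ∑ j ∈ Finset.range N,
        ‖fF ((i:ℝ) * (L/(N:ℝ))) (((j:ℝ) - 1/2) * (L/(N:ℝ)))‖^4)
      = (N:ℝ)^2 * ∑ r ∈ P.image Φ, ‖∑ p ∈ P.filter (fun p => Φ p = r), d' p‖^2 := by
    rw [← Complex.ofReal_inj, hDC2]
    push_cast
    ring
  -- fiber cardinality bound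
  have hNKint : (N:ℤ) = 2*(K:ℤ) + 1 := by exact_mod_cast hN
  have hNpos' : (0:ℤ) < N := by exact_mod_cast hNpos
  have hcomp : ∀ a rr : ℤ, a ∈ J → a % (N:ℤ) = rr → a = rr ∨ a = rr - N := by
    intro a rr haJ hr
    rw [hJdef, Finset.mem_Icc] at haJ
    have h0 : (0:ℤ) ≤ rr := hr ▸ Int.emod_nonneg a hNpos'.ne'
    have h1 : rr < (N:ℤ) := hr ▸ Int.emod_lt_of_pos a hNpos'
    obtain ⟨t, ht⟩ := Int.dvd_self_sub_of_emod_eq hr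
    have ht1 : (N:ℤ) * t < N * 1 := by rw [mul_one]; linarith [haJ.1, haJ.2]
    have ht2 : (N:ℤ) * (-2) < N * t := by linarith [haJ.1, haJ.2]
    have t1 : t < 1 := lt_of_mul_lt_mul_left ht1 hNpos'.le
    have t2 : (-2:ℤ) < t := lt_of_mul_lt_mul_left ht2 hNpos'.le
    interval_cases t
    · right; linarith
    · left; linarith
  have hfibsub : ∀ r : ℤ×ℤ, P.filter (fun p => Φ p = r) ⊆
      ({r.1, r.1 - (N:ℤ)} : Finset ℤ) ×ˢ ({r.2, r.2 - (N:ℤ)} : Finset ℤ) := by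
    intro r p hp
    rw [Finset.mem_filter] at hp
    obtain ⟨hpP, hpΦ⟩ := hp
    rw [hPdef, Finset.mem_product] at hpP
    have hΦ1 : p.1 % (N:ℤ) = r.1 := by rw [← hpΦ]
    have hΦ2 : p.2 % (N:ℤ) = r.2 := by rw [← hpΦ]
    rw [Finset.mem_product, Finset.mem_insert, Finset.mem_singleton, Finset.mem_insert,
      Finset.mem_singleton]
    exact ⟨hcomp p.1 r.1 hpP.1 hΦ1, hcomp p.2 r.2 hpP.2 hΦ2⟩
  have hfibcard : ∀ r : ℤ×ℤ, ((P.filter (fun p => Φ p = r)).card : ℝ) ≤ 4 := by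
    intro r
    have h1 : (P.filter (fun p => Φ p = r)).card ≤ 4 := by
      refine le_trans (Finset.card_le_card (hfibsub r)) ?_
      rw [Finset.card_product]
      have c1 : ({r.1, r.1 - (N:ℤ)} : Finset ℤ).card ≤ 2 :=
        (Finset.card_insert_le _ _).trans (by simp)
      have c2 : ({r.2, r.2 - (N:ℤ)} : Finset ℤ).card ≤ 2 :=
        (Finset.card_insert_le _ _).trans (by simp)
      calc ({r.1, r.1 - (N:ℤ)} : Finset ℤ).card * ({r.2, r.2 - (N:ℤ)} : Finset ℤ).card
          ≤ 2 * 2 := Nat.mul_le_mul c1 c2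
        _ = 4 := rfl
    exact_mod_cast h1
  have hd'norm : ∀ p : ℤ×ℤ, ‖d' p‖ = ‖d p‖ := by
    intro p
    simp only [hd'def]
    rw [norm_mul, Complex.norm_exp_ofReal_mul_I, mul_one]
  have hTbound : ∑ r ∈ P.image Φ, ‖∑ p ∈ P.filter (fun p => Φ p = r), d' p‖^2
      ≤ 4 * ∑ p ∈ P, ‖d p‖^2 := by
    calc ∑ r ∈ P.image Φ, ‖∑ p ∈ P.filter (fun p => Φ p = r), d' p‖^2
        ≤ ∑ r ∈ P.image Φ, (4:ℝ) * ∑ p ∈ P.filter (fun p => Φ p = r), ‖d' p‖^2 := by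
          refine Finset.sum_le_sum fun r _ => ?_
          refine le_trans (st17_sq_norm_sum_le _ _) ?_
          have hnn : (0:ℝ) ≤ ∑ p ∈ P.filter (fun p => Φ p = r), ‖d' p‖^2 :=
            Finset.sum_nonneg fun p _ => by positivity
          exact mul_le_mul_of_nonneg_right (hfibcard r) hnn
      _ = 4 * ∑ r ∈ P.image Φ, ∑ p ∈ P.filter (fun p => Φ p = r), ‖d' p‖^2 := by
          rw [Finset.mul_sum]
      _ = 4 * ∑ p ∈ P, ‖d' p‖^2 := by
          rw [Finset.sum_fiberwise_of_maps_to (fun p hp => Finset.mem_image_of_mem Φ hp)]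
      _ = 4 * ∑ p ∈ P, ‖d p‖^2 := by simp_rw [hd'norm]
  -- combine
  have hkey : (L/(N:ℝ))^2 * ∑ i ∈ Finset.range N, ∑ j ∈ Finset.range N,
      ‖fF ((i:ℝ) * (L/(N:ℝ))) (((j:ℝ) - 1/2) * (L/(N:ℝ)))‖^4
      ≤ 4 * ∫ x in Set.Ioo (0:ℝ) L, ∫ y in Set.Ioo (0:ℝ) L, ‖fF x y‖^4 := by
    rw [hDreal, hcont]
    have heq : (L/(N:ℝ))^2 * ((N:ℝ)^2 * ∑ r ∈ P.image Φ, ‖∑ p ∈ P.filter (fun p => Φ p = r), d' p‖^2)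
        = L^2 * ∑ r ∈ P.image Φ, ‖∑ p ∈ P.filter (fun p => Φ p = r), d' p‖^2 := by
      have hNne : (N:ℝ) ≠ 0 := hNR.ne'
      field_simp
    rw [heq]
    calc L^2 * ∑ r ∈ P.image Φ, ‖∑ p ∈ P.filter (fun p => Φ p = r), d' p‖^2
        ≤ L^2 * (4 * ∑ p ∈ P, ‖d p‖^2) :=
          mul_le_mul_of_nonneg_left hTbound (by positivity)
      _ = 4 * (L^2 * ∑ p ∈ P, ‖d p‖^2) := by ring
  have hInn : (0:ℝ) ≤ ∫ x in Set.Ioo (0:ℝ) L, ∫ y in Set.Ioo (0:ℝ) L, ‖fF x y‖^4 := by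
    rw [hcont]
    have : (0:ℝ) ≤ ∑ p ∈ P, ‖d p‖^2 := Finset.sum_nonneg fun p _ => by positivity
    positivity
  have hDnn : (0:ℝ) ≤ (L/(N:ℝ))^2 * ∑ i ∈ Finset.range N, ∑ j ∈ Finset.range N,
      ‖fF ((i:ℝ) * (L/(N:ℝ))) (((j:ℝ) - 1/2) * (L/(N:ℝ)))‖^4 := by
    have : (0:ℝ) ≤ ∑ i ∈ Finset.range N, ∑ j ∈ Finset.range N,
        ‖fF ((i:ℝ) * (L/(N:ℝ))) (((j:ℝ) - 1/2) * (L/(N:ℝ)))‖^4 :=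
      Finset.sum_nonneg fun i _ => Finset.sum_nonneg fun j _ => by positivity
    positivity
  have hmono := Real.rpow_le_rpow hDnn hkey (by norm_num : (0:ℝ) ≤ 1/4)
  rw [Real.mul_rpow (by norm_num : (0:ℝ) ≤ 4) hInn] at hmono
  have h4 : ((4:ℝ)) ^ ((1:ℝ)/4) = Real.sqrt 2 := by
    rw [show (4:ℝ) = 2^(2:ℕ) by norm_num, ← Real.rpow_natCast 2 2,
      ← Real.rpow_mul (by norm_num : (0:ℝ) ≤ 2), Real.sqrt_eq_rpow]
    norm_num
  rw [h4] at hmono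
  exact hmono
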